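/- arXiv:1704.00573 — 5 statements merged into one kernel-verified Lean document; each statement's English description precedes it below -/
import Mathlib

section
/- Under the observer error dynamics x̃' = -k_{x1}x̃ + Ṽ_x, ỹ' = -k_{y1}ỹ + Ṽ_y, Ṽ_x' = -k_{x2}x̃, Ṽ_y' = -k_{y2}ỹ with initial conditions x̃(t₀)=ỹ(t₀)=0, Ṽ_x(t₀)=V_x, Ṽ_y(t₀)=V_y, and V_x²+V_y² ≤ V_max², the current estimation error satisfies ‖(Ṽ_x(t), Ṽ_y(t))‖ ≤ √(max(k_{x2},k_{y2})/min(k_{x2},k_{y2})) · V_max for all t ≥ t₀. -/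
/-- Under the observer error dynamics with zero initial position errors and
initial current error bounded by `V_max`, the current estimation error remains
bounded by `√(max(k_{x2},k_{y2})/min(k_{x2},k_{y2})) · V_max`. -/
theorem observer_current_error_bound
    (kx1 ky1 kx2 ky2 Vmax t₀ : ℝ) (hkx1 : 0 < kx1) (hky1 : 0 < ky1)
    (hkx2 : 0 < kx2) (hky2 : 0 < ky2) (hVmax : 0 < Vmax)
    (x y Vx Vy : ℝ → ℝ) (Vx₀ Vy₀ : ℝ)
    (hx : ∀ t, HasDerivAt x (-kx1 * x t + Vx t) t)
    (hy : ∀ t, HasDerivAt y (-ky1 * y t + Vy t) t)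
    (hVx : ∀ t, HasDerivAt Vx (-kx2 * x t) t)
    (hVy : ∀ t, HasDerivAt Vy (-ky2 * y t) t)
    (hx0 : x t₀ = 0) (hy0 : y t₀ = 0)
    (hVx0 : Vx t₀ = Vx₀) (hVy0 : Vy t₀ = Vy₀)
    (hV0 : Vx₀ ^ 2 + Vy₀ ^ 2 ≤ Vmax ^ 2) :
    ∀ t ≥ t₀, Real.sqrt ((Vx t) ^ 2 + (Vy t) ^ 2) ≤
      Real.sqrt (max kx2 ky2 / min kx2 ky2) * Vmax := by
  set W : ℝ → ℝ := fun t => x t ^ 2 + y t ^ 2 + Vx t ^ 2 / kx2 + Vy t ^ 2 / ky2 with hWdef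
  have hW : ∀ t, HasDerivAt W (-2 * kx1 * x t ^ 2 - 2 * ky1 * y t ^ 2) t := by
    intro t
    have h1 := ((hx t).pow 2).add ((hy t).pow 2)
    have h2 := (((hVx t).pow 2).div_const kx2).add (((hVy t).pow 2).div_const ky2)
    have h := h1.add h2
    convert h using 1
    · rfl
    · rfl
    · ext s; simp only [hWdef, Pi.add_apply, Pi.pow_apply]; ring
    · norm_num
      field_simp
      ring
  have hanti : Antitone W := by
    apply antitone_of_deriv_nonpos
    · exact fun t => (hW t).differentiableAt
    · intro t
      rw [(hW t).deriv]
      have := sq_nonneg (x t); have := sq_nonneg (y t)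
      nlinarith
  intro t ht
  have hWt : W t ≤ W t₀ := hanti ht
  have hWt0 : W t₀ = Vx₀ ^ 2 / kx2 + Vy₀ ^ 2 / ky2 := by
    simp [hWdef, hx0, hy0, hVx0, hVy0]
  have hmin : 0 < min kx2 ky2 := lt_min hkx2 hky2
  have hmax : 0 < max kx2 ky2 := lt_of_lt_of_le hkx2 (le_max_left _ _)
  have hkey : Vx t ^ 2 + Vy t ^ 2 ≤ max kx2 ky2 / min kx2 ky2 * Vmax ^ 2 := by
    have h1 : Vx t ^ 2 + Vy t ^ 2 ≤ max kx2 ky2 * (Vx t ^ 2 / kx2 + Vy t ^ 2 / ky2) := by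
      have a1 : Vx t ^ 2 ≤ max kx2 ky2 * (Vx t ^ 2 / kx2) := by
        rw [mul_div_assoc']
        rw [le_div_iff₀ hkx2]
        nlinarith [sq_nonneg (Vx t), le_max_left kx2 ky2]
      have a2 : Vy t ^ 2 ≤ max kx2 ky2 * (Vy t ^ 2 / ky2) := by
        rw [mul_div_assoc']
        rw [le_div_iff₀ hky2]
        nlinarith [sq_nonneg (Vy t), le_max_right kx2 ky2]
      linarith [a1, a2, mul_add (max kx2 ky2) (Vx t ^ 2 / kx2) (Vy t ^ 2 / ky2)]
    have h2 : Vx t ^ 2 / kx2 + Vy t ^ 2 / ky2 ≤ W t := by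
      have := sq_nonneg (x t); have := sq_nonneg (y t)
      simp only [hWdef]; linarith
    have h3 : Vx₀ ^ 2 / kx2 + Vy₀ ^ 2 / ky2 ≤ Vmax ^ 2 / min kx2 ky2 := by
      have b1 : Vx₀ ^ 2 / kx2 ≤ Vx₀ ^ 2 / min kx2 ky2 :=
        div_le_div_of_nonneg_left (sq_nonneg _) hmin (min_le_left _ _)
      have b2 : Vy₀ ^ 2 / ky2 ≤ Vy₀ ^ 2 / min kx2 ky2 :=
        div_le_div_of_nonneg_left (sq_nonneg _) hmin (min_le_right _ _)
      calc Vx₀ ^ 2 / kx2 + Vy₀ ^ 2 / ky2 ≤ (Vx₀ ^ 2 + Vy₀ ^ 2) / min kx2 ky2 := by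
            rw [add_div]; linarith
        _ ≤ Vmax ^ 2 / min kx2 ky2 := by gcongr
    calc Vx t ^ 2 + Vy t ^ 2 ≤ max kx2 ky2 * (Vx t ^ 2 / kx2 + Vy t ^ 2 / ky2) := h1
      _ ≤ max kx2 ky2 * (Vmax ^ 2 / min kx2 ky2) := by
          apply mul_le_mul_of_nonneg_left _ hmax.le
          calc Vx t ^ 2 / kx2 + Vy t ^ 2 / ky2 ≤ W t := h2
            _ ≤ W t₀ := hWt
            _ = Vx₀ ^ 2 / kx2 + Vy₀ ^ 2 / ky2 := hWt0
            _ ≤ Vmax ^ 2 / min kx2 ky2 := h3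
      _ = max kx2 ky2 / min kx2 ky2 * Vmax ^ 2 := by ring
  calc Real.sqrt (Vx t ^ 2 + Vy t ^ 2)
      ≤ Real.sqrt (max kx2 ky2 / min kx2 ky2 * Vmax ^ 2) := Real.sqrt_le_sqrt hkey
    _ = Real.sqrt (max kx2 ky2 / min kx2 ky2) * Vmax := by
        rw [Real.sqrt_mul (by positivity), Real.sqrt_sq hVmax.le]
end

section
/- If k_{x2} = k_{y2} in the observer error dynamics with zero initial position errors and initial current error of norm at most V_max, then ‖(Ṽ_x(t), Ṽ_y(t))‖ ≤ V_max for all t; consequently the estimate V̂ = V - Ṽ satisfies ‖V̂(t)‖ ≤ 2V_max, and in particular any projection V̂_N of V̂ onto a unit vector satisfies |V̂_N(t)| ≤ 2V_max. -/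
private lemma sqrt_triangle (a b c d : ℝ) :
    Real.sqrt ((a - c) ^ 2 + (b - d) ^ 2) ≤
      Real.sqrt (a ^ 2 + b ^ 2) + Real.sqrt (c ^ 2 + d ^ 2) := by
  have h := norm_sub_le (Complex.mk a b) (Complex.mk c d)
  simpa [Complex.norm_def, Complex.normSq_apply, Complex.normSq_mk, Complex.ext_iff, sq, mul_comm] using h

/-- If `k_{x2} = k_{y2}`, with zero initial position errors and initial current
error of norm at most `V_max`, then the current estimation error stays bounded
by `V_max`; consequently the estimate `V̂ = V - Ṽ` satisfies `‖V̂‖ ≤ 2V_max`,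
and any projection of `V̂` onto a unit direction is bounded by `2V_max`. -/
theorem observer_estimate_bound
    (kx1 ky1 kx2 ky2 Vmax t₀ : ℝ) (hkx1 : 0 < kx1) (hky1 : 0 < ky1)
    (hkx2 : 0 < kx2) (hky2 : 0 < ky2) (hkeq : kx2 = ky2) (hVmax : 0 < Vmax)
    (x y Vtx Vty : ℝ → ℝ) (VX VY : ℝ)
    (hx : ∀ t, HasDerivAt x (-kx1 * x t + Vtx t) t)
    (hy : ∀ t, HasDerivAt y (-ky1 * y t + Vty t) t)
    (hVx : ∀ t, HasDerivAt Vtx (-kx2 * x t) t)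
    (hVy : ∀ t, HasDerivAt Vty (-ky2 * y t) t)
    (hx0 : x t₀ = 0) (hy0 : y t₀ = 0)
    (hV0 : Real.sqrt ((Vtx t₀) ^ 2 + (Vty t₀) ^ 2) ≤ Vmax)
    (hV : Real.sqrt (VX ^ 2 + VY ^ 2) ≤ Vmax) :
    ∀ t ≥ t₀,
      Real.sqrt ((Vtx t) ^ 2 + (Vty t) ^ 2) ≤ Vmax ∧
      Real.sqrt ((VX - Vtx t) ^ 2 + (VY - Vty t) ^ 2) ≤ 2 * Vmax ∧
      ∀ γ : ℝ, |(-(VX - Vtx t)) * Real.sin γ + (VY - Vty t) * Real.cos γ| ≤ 2 * Vmax := by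
  set E : ℝ → ℝ := fun t => kx2 * (x t) ^ 2 + ky2 * (y t) ^ 2 + (Vtx t) ^ 2 + (Vty t) ^ 2
    with hEdef
  have hE : ∀ t, HasDerivAt E (-2 * kx1 * kx2 * (x t) ^ 2 - 2 * ky1 * ky2 * (y t) ^ 2) t := by
    intro t
    have h1 := (((hx t).pow 2).const_mul kx2).add (((hy t).pow 2).const_mul ky2)
    have h2 := (h1.add ((hVx t).pow 2)).add ((hVy t).pow 2)
    refine h2.congr_deriv ?_
    ring
  have hanti : AntitoneOn E (Set.Ici t₀) := by
    apply antitoneOn_of_deriv_nonpos (convex_Ici t₀)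
    · exact fun t _ => (hE t).continuousAt.continuousWithinAt
    · exact fun t _ => (hE t).differentiableAt.differentiableWithinAt
    · intro t _
      rw [(hE t).deriv]
      nlinarith [mul_pos hkx1 hkx2, mul_pos hky1 hky2, sq_nonneg (x t), sq_nonneg (y t)]
  have hE0 : E t₀ ≤ Vmax ^ 2 := by
    have h2 : (Vtx t₀) ^ 2 + (Vty t₀) ^ 2 ≤ Vmax ^ 2 := by
      have := Real.sq_sqrt (by positivity : (0:ℝ) ≤ (Vtx t₀) ^ 2 + (Vty t₀) ^ 2)
      nlinarith [Real.sqrt_nonneg ((Vtx t₀) ^ 2 + (Vty t₀) ^ 2)]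
    simp only [hEdef, hx0, hy0]
    nlinarith
  have hVle : VX ^ 2 + VY ^ 2 ≤ Vmax ^ 2 := by
    have := Real.sq_sqrt (by positivity : (0:ℝ) ≤ VX ^ 2 + VY ^ 2)
    nlinarith [Real.sqrt_nonneg (VX ^ 2 + VY ^ 2)]
  intro t ht
  have hEt : E t ≤ Vmax ^ 2 :=
    le_trans (hanti (Set.self_mem_Ici) ht ht) hE0
  have hsum : (Vtx t) ^ 2 + (Vty t) ^ 2 ≤ Vmax ^ 2 := by
    have : 0 ≤ kx2 * (x t) ^ 2 + ky2 * (y t) ^ 2 := by positivity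
    simp only [hEdef] at hEt; linarith
  have h1 : Real.sqrt ((Vtx t) ^ 2 + (Vty t) ^ 2) ≤ Vmax := by
    calc Real.sqrt ((Vtx t) ^ 2 + (Vty t) ^ 2) ≤ Real.sqrt (Vmax ^ 2) :=
          Real.sqrt_le_sqrt hsum
      _ = Vmax := Real.sqrt_sq hVmax.le
  have h2 : Real.sqrt ((VX - Vtx t) ^ 2 + (VY - Vty t) ^ 2) ≤ 2 * Vmax := by
    calc Real.sqrt ((VX - Vtx t) ^ 2 + (VY - Vty t) ^ 2)
        ≤ Real.sqrt (VX ^ 2 + VY ^ 2) + Real.sqrt ((Vtx t) ^ 2 + (Vty t) ^ 2) :=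
          sqrt_triangle _ _ _ _
      _ ≤ Vmax + Vmax := add_le_add hV h1
      _ = 2 * Vmax := by ring
  refine ⟨h1, h2, fun γ => ?_⟩
  set a := VX - Vtx t
  set b := VY - Vty t
  have hCS : |(-a) * Real.sin γ + b * Real.cos γ| ≤ Real.sqrt (a ^ 2 + b ^ 2) := by
    rw [← Real.sqrt_sq_eq_abs]
    apply Real.sqrt_le_sqrt
    nlinarith [sq_nonneg (a * Real.cos γ + b * Real.sin γ), Real.sin_sq_add_cos_sq γ]
  exact le_trans hCS h2
end

section
/- Consider ẏ = -u_td · y/√(Δ² + (y+g)²) with u_td > 0, Δ > 0, and g a bounded continuous function of time (|g(t)| ≤ G). The origin y = 0 is globally asymptotically stable and locally exponentially stable: for every initial condition y(0), there exist α > 0 (depending on |y(0)|, G, Δ, u_td) such that |y(t)| ≤ |y(0)|e^{-αt}. -/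
/-- For `ẏ = -u_td·y/√(Δ² + (y+g(t))²)` with `u_td, Δ > 0` and `g` continuous
and bounded, the origin is globally asymptotically and locally exponentially
stable: each solution decays exponentially from its initial value. -/
theorem crosstrack_nominal_exponential
    (utd Δ G : ℝ) (hutd : 0 < utd) (hΔ : 0 < Δ) (hG : 0 ≤ G)
    (g : ℝ → ℝ) (hgc : Continuous g) (hgb : ∀ t, |g t| ≤ G)
    (y : ℝ → ℝ)
    (hy : ∀ t, HasDerivAt y (-utd * y t / Real.sqrt (Δ ^ 2 + (y t + g t) ^ 2)) t) :
    ∃ α > 0, ∀ t ≥ 0, |y t| ≤ |y 0| * Real.exp (-α * t) := by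
  set s : ℝ → ℝ := fun t => Real.sqrt (Δ ^ 2 + (y t + g t) ^ 2) with hs
  have hspos : ∀ t, 0 < s t := by
    intro t
    apply Real.sqrt_pos.mpr
    positivity
  -- f = y² has derivative 2 y y' ≤ 0
  have hf : ∀ t, HasDerivAt (fun t => y t ^ 2)
      (-2 * utd * y t ^ 2 / s t) t := by
    intro t
    have := (hasDerivAt_pow 2 (y t)).comp t (hy t)
    refine this.congr_deriv ?_
    push_cast
    ring
  have hfdiff : Differentiable ℝ (fun t => y t ^ 2) :=
    fun t => (hf t).differentiableAt
  have hanti : Antitone (fun t => y t ^ 2) := by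
    apply antitone_of_deriv_nonpos hfdiff
    intro t
    rw [(hf t).deriv]
    apply div_nonpos_of_nonpos_of_nonneg
    · nlinarith [sq_nonneg (y t)]
    · exact (hspos t).le
  have hinv : ∀ t ≥ 0, |y t| ≤ |y 0| := by
    intro t ht
    have h := hanti ht
    calc |y t| = Real.sqrt (y t ^ 2) := (Real.sqrt_sq_eq_abs _).symm
      _ ≤ Real.sqrt (y 0 ^ 2) := Real.sqrt_le_sqrt h
      _ = |y 0| := Real.sqrt_sq_eq_abs _
  set M : ℝ := Real.sqrt (Δ ^ 2 + (|y 0| + G) ^ 2) with hM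
  have hMpos : 0 < M := Real.sqrt_pos.mpr (by positivity)
  have hsM : ∀ t ≥ 0, s t ≤ M := by
    intro t ht
    apply Real.sqrt_le_sqrt
    have h1 : |y t + g t| ≤ |y 0| + G :=
      (abs_add_le _ _).trans (add_le_add (hinv t ht) (hgb t))
    nlinarith [abs_nonneg (y t + g t), sq_abs (y t + g t), abs_nonneg (y 0)]
  refine ⟨utd / M, div_pos hutd hMpos, ?_⟩
  set α : ℝ := utd / M with hα
  -- h = exp(2αt) y² is antitone on [0,∞)
  have hh : ∀ t, HasDerivAt (fun t => Real.exp (2 * α * t) * y t ^ 2)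
      (Real.exp (2 * α * t) * (2 * α * y t ^ 2 + -2 * utd * y t ^ 2 / s t)) t := by
    intro t
    have he : HasDerivAt (fun t => Real.exp (2 * α * t)) (Real.exp (2 * α * t) * (2 * α)) t := by
      have : HasDerivAt (fun t : ℝ => 2 * α * t) (2 * α) t := by
        simpa using (hasDerivAt_id t).const_mul (2 * α)
      exact this.exp
    have := he.mul (hf t)
    refine this.congr_deriv ?_
    ring
  have hhanti : AntitoneOn (fun t => Real.exp (2 * α * t) * y t ^ 2) (Set.Ici 0) := by
    apply antitoneOn_of_deriv_nonpos (convex_Ici 0)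
    · exact (Continuous.mul (by continuity) hfdiff.continuous).continuousOn
    · intro t _
      exact (hh t).differentiableAt.differentiableWithinAt
    · intro t ht
      rw [interior_Ici] at ht
      rw [(hh t).deriv]
      apply mul_nonpos_of_nonneg_of_nonpos (Real.exp_nonneg _)
      have hst := hspos t
      have hsMt := hsM t ht.le
      have hαs : α * s t ≤ utd := by
        rw [hα, div_mul_eq_mul_div, div_le_iff₀ hMpos]
        nlinarith [hst.le]
      have hdiv : -2 * utd * y t ^ 2 / s t ≤ -2 * α * y t ^ 2 := by
        rw [div_le_iff₀ hst]
        nlinarith [sq_nonneg (y t)]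
      linarith
  intro t ht
  have key := hhanti (Set.self_mem_Ici) (Set.mem_Ici.mpr ht) ht
  simp only [mul_zero, Real.exp_zero, one_mul] at key
  -- key : exp(2αt) * y t ^ 2 ≤ y 0 ^ 2
  have h1 : y t ^ 2 ≤ y 0 ^ 2 * Real.exp (-α * t) ^ 2 := by
    have he : Real.exp (-α * t) ^ 2 * Real.exp (2 * α * t) = 1 := by
      rw [sq, ← Real.exp_add, ← Real.exp_add, ← Real.exp_zero]
      ring_nf
    calc y t ^ 2 = Real.exp (-α * t) ^ 2 * (Real.exp (2 * α * t) * y t ^ 2) := by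
          rw [← mul_assoc, he, one_mul]
      _ ≤ Real.exp (-α * t) ^ 2 * y 0 ^ 2 :=
          mul_le_mul_of_nonneg_left key (sq_nonneg _)
      _ = y 0 ^ 2 * Real.exp (-α * t) ^ 2 := mul_comm _ _
  calc |y t| = Real.sqrt (y t ^ 2) := (Real.sqrt_sq_eq_abs _).symm
    _ ≤ Real.sqrt (y 0 ^ 2 * Real.exp (-α * t) ^ 2) := Real.sqrt_le_sqrt h1
    _ = |y 0| * Real.exp (-α * t) := by
        rw [Real.sqrt_mul (sq_nonneg _), Real.sqrt_sq_eq_abs, Real.sqrt_sq (Real.exp_nonneg _)]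
end

section
/- With the augmented update law θ̇ = (u_t cos(χ-γ(θ)) + V̂_T + k_δ x_{b/p})/(1 - κ(θ)y_{b/p}), the along-track error satisfies ẋ_{b/p} = -k_δ x_{b/p} + Ṽ_T, where Ṽ_T = V_T - V̂_T. If Ṽ_T(t) → 0 exponentially with rate λ and k_δ > 0, then x_{b/p}(t) → 0 exponentially. -/
/-- With the augmented update law
`θ̇ = (u_t cos(χ-γ(θ)) + V̂_T + k_δ x_{b/p})/(1 - κ(θ)y_{b/p})`, the along-track
error satisfies `ẋ = -k_δ x + Ṽ_T`; if `Ṽ_T → 0` exponentially and `k_δ > 0`,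
then `x → 0` exponentially. -/
theorem along_track_exponential
    (ut χ VT VThat yb : ℝ → ℝ) (κ γ : ℝ → ℝ) (θ x dθ : ℝ → ℝ) (kδ : ℝ)
    (hkδ : 0 < kδ)
    (hden : ∀ t, 1 - κ (θ t) * yb t ≠ 0)
    (hθ : ∀ t, dθ t =
      (ut t * Real.cos (χ t - γ (θ t)) + VThat t + kδ * x t) / (1 - κ (θ t) * yb t))
    (hx : ∀ t, HasDerivAt x
      (-(dθ t) * (1 - κ (θ t) * yb t) + ut t * Real.cos (χ t - γ (θ t)) + VT t) t)
    (C lam : ℝ) (hC : 0 ≤ C) (hlam : 0 < lam)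
    (hdecay : ∀ t ≥ 0, |VT t - VThat t| ≤ C * Real.exp (-lam * t)) :
    (∀ t, HasDerivAt x (-kδ * x t + (VT t - VThat t)) t) ∧
    ∃ M α, 0 < α ∧ ∀ t ≥ 0, |x t| ≤ M * Real.exp (-α * t) := by
  have hx' : ∀ t, HasDerivAt x (-kδ * x t + (VT t - VThat t)) t := by
    intro t
    have h := hx t
    have hd := hden t
    have heq : -(dθ t) * (1 - κ (θ t) * yb t) + ut t * Real.cos (χ t - γ (θ t)) + VT t
        = -kδ * x t + (VT t - VThat t) := by
      rw [hθ t]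
      field_simp
      ring
    rwa [heq] at h
  refine ⟨hx', ?_⟩
  set α : ℝ := min kδ lam / 2 with hαdef
  have hα0 : 0 < α := by positivity
  have hαk : α < kδ := by
    have h1 : min kδ lam ≤ kδ := min_le_left _ _
    have h2 : 0 < min kδ lam := lt_min hkδ hlam
    simp only [hαdef]; linarith
  have hαl : α < lam := by
    have h1 : min kδ lam ≤ lam := min_le_right _ _
    have h2 : 0 < min kδ lam := lt_min hkδ hlam
    simp only [hαdef]; linarith
  set β : ℝ := kδ - α with hβdef
  have hβ0 : 0 < β := by simp only [hβdef]; linarith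
  have hbl : kδ - lam ≤ β := by simp only [hβdef]; linarith
  -- h s = exp(kδ s) * x s
  set h : ℝ → ℝ := fun s => Real.exp (kδ * s) * x s with hh
  have hexp : ∀ (c s : ℝ), HasDerivAt (fun s => Real.exp (c * s)) (c * Real.exp (c * s)) s := by
    intro c s
    simpa [mul_comm, Function.comp_def] using (Real.hasDerivAt_exp (c * s)).comp s ((hasDerivAt_id s).const_mul c)
  have hh' : ∀ s, HasDerivAt h (Real.exp (kδ * s) * (VT s - VThat s)) s := by
    intro s
    have := (hexp kδ s).mul (hx' s)
    refine this.congr_deriv ?_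
    ring
  -- comparison function φ s = (C/β) * exp (β s)
  set φ : ℝ → ℝ := fun s => C / β * Real.exp (β * s) with hφ
  have hφ' : ∀ s, HasDerivAt φ (C * Real.exp (β * s)) s := by
    intro s
    have := (hexp β s).const_mul (C / β)
    refine this.congr_deriv ?_
    field_simp
  have hbnd : ∀ s ∈ Set.Ici (0:ℝ), |Real.exp (kδ * s) * (VT s - VThat s)| ≤ C * Real.exp (β * s) := by
    intro s hs
    rw [abs_mul, abs_of_pos (Real.exp_pos _)]
    calc Real.exp (kδ * s) * |VT s - VThat s|
        ≤ Real.exp (kδ * s) * (C * Real.exp (-lam * s)) := by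
          exact mul_le_mul_of_nonneg_left (hdecay s hs) (Real.exp_pos _).le
      _ = C * Real.exp ((kδ - lam) * s) := by
          rw [mul_left_comm, ← Real.exp_add]; ring_nf
      _ ≤ C * Real.exp (β * s) := by
          apply mul_le_mul_of_nonneg_left _ hC
          exact Real.exp_le_exp.2 (mul_le_mul_of_nonneg_right hbl hs)
  have hxcont : Continuous x := continuous_iff_continuousAt.2 fun s => (hx' s).continuousAt
  -- φ - h and φ + h are monotone on Ici 0
  have mono : ∀ (ε : ℝ), ε = 1 ∨ ε = -1 → MonotoneOn (fun s => φ s + ε * h s) (Set.Ici (0:ℝ)) := by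
    intro ε hε
    apply monotoneOn_of_deriv_nonneg (convex_Ici 0)
    · have hc2 : Continuous h := by fun_prop
      fun_prop
    · intro s hs
      exact ((hφ' s).add ((hh' s).const_mul ε)).differentiableAt.differentiableWithinAt
    · intro s hs
      rw [interior_Ici] at hs
      have hd : HasDerivAt (fun s => φ s + ε * h s)
          (C * Real.exp (β * s) + ε * (Real.exp (kδ * s) * (VT s - VThat s))) s :=
        (hφ' s).add ((hh' s).const_mul ε)
      rw [hd.deriv]
      have hb := hbnd s (Set.mem_Ici.mpr (le_of_lt hs))
      rcases hε with hε | hε <;> subst hε <;>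
        cases abs_le.mp hb with
        | intro h1 h2 => linarith
  refine ⟨|x 0| + C / β, α, hα0, ?_⟩
  intro t ht
  have h0 : (0:ℝ) ∈ Set.Ici (0:ℝ) := Set.self_mem_Ici
  have htm : t ∈ Set.Ici (0:ℝ) := ht
  have m1 := mono 1 (Or.inl rfl) h0 htm ht
  have m2 := mono (-1) (Or.inr rfl) h0 htm ht
  simp only [one_mul, neg_one_mul, neg_mul] at m1 m2
  have hφ0 : φ 0 = C / β := by simp [hφ]
  have hh0 : h 0 = x 0 := by simp [hh]
  have hCβ : 0 ≤ C / β := div_nonneg hC hβ0.le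
  have habs1 : h 0 ≤ |x 0| := hh0 ▸ le_abs_self _
  have habs2 : -|x 0| ≤ h 0 := hh0 ▸ neg_abs_le _
  have hht : |h t| ≤ |x 0| + C / β * Real.exp (β * t) := by
    have hφt : φ t = C / β * Real.exp (β * t) := rfl
    rw [abs_le]
    constructor <;> [skip; skip] <;>
      [ (have := m1; nlinarith [Real.exp_pos (β * t)]);
        (have := m2; nlinarith [Real.exp_pos (β * t)]) ]
  have key : |x t| = Real.exp (-(kδ * t)) * |h t| := by
    have : x t = Real.exp (-(kδ * t)) * h t := by
      simp only [hh]
      rw [← mul_assoc, ← Real.exp_add]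
      simp
    rw [this, abs_mul, abs_of_pos (Real.exp_pos _)]
  rw [key]
  have hmul : Real.exp (-(kδ * t)) * |h t|
      ≤ Real.exp (-(kδ * t)) * (|x 0| + C / β * Real.exp (β * t)) :=
    mul_le_mul_of_nonneg_left hht (Real.exp_pos _).le
  refine hmul.trans ?_
  have e1 : Real.exp (-(kδ * t)) * (C / β * Real.exp (β * t)) = C / β * Real.exp (-α * t) := by
    rw [mul_comm (Real.exp _) _, mul_assoc, ← Real.exp_add]
    congr 2
    simp only [hβdef]; ring
  have e2 : Real.exp (-(kδ * t)) ≤ Real.exp (-α * t) := by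
    apply Real.exp_le_exp.2
    nlinarith
  have := mul_le_mul_of_nonneg_left e2 (abs_nonneg (x 0))
  calc Real.exp (-(kδ * t)) * (|x 0| + C / β * Real.exp (β * t))
      = |x 0| * Real.exp (-(kδ * t)) + Real.exp (-(kδ * t)) * (C / β * Real.exp (β * t)) := by ring
    _ ≤ |x 0| * Real.exp (-α * t) + C / β * Real.exp (-α * t) := by
        rw [e1]
        nlinarith
    _ = (|x 0| + C / β) * Real.exp (-α * t) := by ring
end

section
/- Consider the time-varying system ψ̃' = C_r(t)r̃, r̃' = -k₁r̃ - k₂C_r(t)ψ̃ with k₁, k₂ > 0 and C_r continuous satisfying 0 < c ≤ C_r(t) ≤ C for all t. Then r̃(t) → 0 as t → ∞, and consequently ψ̃(t) → 0; i.e., the origin is globally asymptotically stable. -/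
set_option maxHeartbeats 1000000

/-- For `ψ̃' = C_r(t)r̃`, `r̃' = -k₁r̃ - k₂C_r(t)ψ̃` with `k₁, k₂ > 0` and
`0 < c ≤ C_r(t) ≤ C`, both `r̃` and `ψ̃` converge to zero. -/
theorem yaw_error_asymptotic_stability
    (k₁ k₂ c C : ℝ) (hk₁ : 0 < k₁) (hk₂ : 0 < k₂) (hc : 0 < c)
    (Cr ψ r : ℝ → ℝ) (hCr : Continuous Cr)
    (hbnd : ∀ t, c ≤ Cr t ∧ Cr t ≤ C)
    (hψ : ∀ t, HasDerivAt ψ (Cr t * r t) t)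
    (hr : ∀ t, HasDerivAt r (-k₁ * r t - k₂ * Cr t * ψ t) t) :
    Filter.Tendsto r Filter.atTop (nhds 0) ∧
    Filter.Tendsto ψ Filter.atTop (nhds 0) := by
  have hC0 : 0 < C := lt_of_lt_of_le hc (le_trans (hbnd 0).1 (hbnd 0).2)
  obtain ⟨m, hm0, hmk₂, hm1⟩ : ∃ m : ℝ, 0 < m ∧ m ≤ k₂ ∧ m ≤ 1 :=
    ⟨min k₂ 1, lt_min hk₂ one_pos, min_le_left _ _, min_le_right _ _⟩
  have hden : (0:ℝ) < 2*C*k₂*c + k₁^2 := by positivity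
  obtain ⟨ε, hε0, hε1, hε2⟩ :
      ∃ ε : ℝ, 0 < ε ∧ ε ≤ m/2 ∧ ε*(2*C*k₂*c + k₁^2) ≤ k₁*k₂*c := by
    refine ⟨min (m/2) (k₁*k₂*c / (2*C*k₂*c + k₁^2)),
      lt_min (by positivity) (by positivity), min_le_left _ _, ?_⟩
    calc min (m/2) (k₁*k₂*c / (2*C*k₂*c + k₁^2)) * (2*C*k₂*c + k₁^2)
        ≤ (k₁*k₂*c / (2*C*k₂*c + k₁^2)) * (2*C*k₂*c + k₁^2) :=
          mul_le_mul_of_nonneg_right (min_le_right _ _) hden.le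
      _ = k₁*k₂*c := div_mul_cancel₀ _ hden.ne'
  obtain ⟨μ, hμ0, hμ1, hμ2⟩ : ∃ μ : ℝ, 0 < μ ∧ μ ≤ k₁/2 ∧ μ ≤ ε*k₂*c/2 :=
    ⟨min (k₁/2) (ε*k₂*c/2), lt_min (by positivity) (by positivity),
      min_le_left _ _, min_le_right _ _⟩
  obtain ⟨M, hM0, hMk₂, hM1⟩ : ∃ M : ℝ, 0 < M ∧ k₂/2 + ε/2 ≤ M ∧ 1/2 + ε/2 ≤ M :=
    ⟨(max k₂ 1)/2 + ε/2, by positivity,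
      by have := le_max_left k₂ 1; linarith, by have := le_max_right k₂ 1; linarith⟩
  obtain ⟨α, hα0, hαM⟩ : ∃ α : ℝ, 0 < α ∧ α * M = μ :=
    ⟨μ/M, div_pos hμ0 hM0, div_mul_cancel₀ _ hM0.ne'⟩
  -- Lyapunov function and its derivative
  set g : ℝ → ℝ := fun t => k₂/2 * (ψ t * ψ t) + 1/2 * (r t * r t) + ε * (ψ t * r t)
    with hgdef
  set g' : ℝ → ℝ := fun t =>
    -k₁ * (r t)^2 + ε * (Cr t * (r t)^2 - k₁ * (ψ t * r t) - k₂ * Cr t * (ψ t)^2)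
    with hg'def
  have hg : ∀ t, HasDerivAt g (g' t) t := by
    intro t
    have h := ((((hψ t).mul (hψ t)).const_mul (k₂/2)).add
        (((hr t).mul (hr t)).const_mul (1/2))).add (((hψ t).mul (hr t)).const_mul ε)
    refine h.congr_deriv ?_
    simp only [hg'def]
    ring
  -- quadratic bounds
  have hupper : ∀ t, g t ≤ M * ((ψ t)^2 + (r t)^2) := by
    intro t
    have h1 : 0 ≤ ε * (ψ t - r t)^2 := by positivity
    have h2 : 0 ≤ (M - k₂/2 - ε/2) * (ψ t)^2 := mul_nonneg (by linarith) (sq_nonneg _)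
    have h3 : 0 ≤ (M - 1/2 - ε/2) * (r t)^2 := mul_nonneg (by linarith) (sq_nonneg _)
    simp only [hgdef]
    nlinarith
  have hlower : ∀ t, m/4 * ((ψ t)^2 + (r t)^2) ≤ g t := by
    intro t
    have h3 : 0 ≤ ε * (ψ t + r t)^2 := by positivity
    have h4 : 0 ≤ (m/2 - ε) * (ψ t)^2 := mul_nonneg (by linarith) (sq_nonneg _)
    have h5 : 0 ≤ (m/2 - ε) * (r t)^2 := mul_nonneg (by linarith) (sq_nonneg _)
    have h6 : 0 ≤ (k₂ - m) * (ψ t)^2 := mul_nonneg (by linarith) (sq_nonneg _)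
    have h7 : 0 ≤ (1 - m) * (r t)^2 := mul_nonneg (by linarith) (sq_nonneg _)
    simp only [hgdef]
    nlinarith
  have hgnonneg : ∀ t, 0 ≤ g t := fun t =>
    le_trans (mul_nonneg (by linarith : (0:ℝ) ≤ m/4) (by positivity)) (hlower t)
  -- derivative estimate: g' ≤ -α g
  have hαg : ∀ t, g' t ≤ -α * g t := by
    intro t
    obtain ⟨huc, huC⟩ := hbnd t
    have key : g' t ≤ -(k₁/2) * (r t)^2 - (ε*k₂*c/2) * (ψ t)^2 := by
      have h1 : 0 ≤ ε * (k₂*c*ψ t + k₁*r t)^2 := by positivity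
      have h2 : 0 ≤ 2*k₂*c*ε * ((C - Cr t) * (r t)^2) := by
        have : 0 ≤ C - Cr t := by linarith
        positivity
      have h3 : 0 ≤ 2*k₂^2*c*ε * ((Cr t - c) * (ψ t)^2) := by
        have : 0 ≤ Cr t - c := by linarith
        positivity
      have h4 : 0 ≤ (k₁*k₂*c - ε*(2*C*k₂*c + k₁^2)) * (r t)^2 :=
        mul_nonneg (by linarith) (sq_nonneg _)
      have h0 : (0:ℝ) < 2*(k₂*c) := by positivity
      have hmain : 2*(k₂*c) * (g' t + (k₁/2) * (r t)^2 + (ε*k₂*c/2) * (ψ t)^2)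
          ≤ 2*(k₂*c) * 0 := by
        simp only [hg'def]
        nlinarith [h1, h2, h3, h4]
      have := le_of_mul_le_mul_left hmain h0
      linarith
    have step2 : -(k₁/2) * (r t)^2 - (ε*k₂*c/2) * (ψ t)^2 ≤ -μ * ((ψ t)^2 + (r t)^2) := by
      have h5 : 0 ≤ (k₁/2 - μ) * (r t)^2 := mul_nonneg (by linarith) (sq_nonneg _)
      have h6 : 0 ≤ (ε*k₂*c/2 - μ) * (ψ t)^2 := mul_nonneg (by linarith) (sq_nonneg _)
      nlinarith
    have step3 : α * g t ≤ μ * ((ψ t)^2 + (r t)^2) := by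
      have h7 : α * g t ≤ α * (M * ((ψ t)^2 + (r t)^2)) :=
        mul_le_mul_of_nonneg_left (hupper t) hα0.le
      have h8 : α * (M * ((ψ t)^2 + (r t)^2)) = μ * ((ψ t)^2 + (r t)^2) := by
        rw [← hαM]; ring
      linarith
    calc g' t ≤ -(k₁/2) * (r t)^2 - (ε*k₂*c/2) * (ψ t)^2 := key
      _ ≤ -μ * ((ψ t)^2 + (r t)^2) := step2
      _ = -(μ * ((ψ t)^2 + (r t)^2)) := by ring
      _ ≤ -(α * g t) := neg_le_neg step3
      _ = -α * g t := by ring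
  -- exponential decay via the auxiliary function g(t)·exp(αt)
  set F : ℝ → ℝ := fun t => g t * Real.exp (α * t) with hFdef
  have hF : ∀ t, HasDerivAt F
      (g' t * Real.exp (α * t) + g t * (Real.exp (α * t) * (α * 1))) t := by
    intro t
    exact (hg t).mul (((hasDerivAt_id t).const_mul α).exp)
  have hFanti : Antitone F := by
    apply antitone_of_hasDerivAt_nonpos hF
    intro t
    show g' t * Real.exp (α * t) + g t * (Real.exp (α * t) * (α * 1)) ≤ 0
    have he : 0 < Real.exp (α * t) := Real.exp_pos _
    have h1 := mul_le_mul_of_nonneg_right (hαg t) he.le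
    nlinarith
  -- g tends to 0
  have hBtend : Filter.Tendsto (fun t => g 0 * Real.exp (-(α * t))) Filter.atTop (nhds 0) := by
    have h1 : Filter.Tendsto (fun t : ℝ => α * t) Filter.atTop Filter.atTop :=
      Filter.Tendsto.const_mul_atTop hα0 Filter.tendsto_id
    have h2 : Filter.Tendsto (fun t : ℝ => Real.exp (-(α * t))) Filter.atTop (nhds 0) :=
      Real.tendsto_exp_neg_atTop_nhds_zero.comp h1
    have := h2.const_mul (g 0)
    simpa using this
  have hgle : ∀ t ≥ (0:ℝ), g t ≤ g 0 * Real.exp (-(α * t)) := by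
    intro t ht
    have h1 : F t ≤ F 0 := hFanti ht
    have h2 : F 0 = g 0 := by simp [hFdef]
    rw [h2] at h1
    have h3 : g t = F t * Real.exp (-(α * t)) := by
      simp only [hFdef]
      rw [mul_assoc, ← Real.exp_add]
      simp
    rw [h3]
    exact mul_le_mul_of_nonneg_right h1 (Real.exp_pos _).le
  have hgtend : Filter.Tendsto g Filter.atTop (nhds 0) := by
    apply tendsto_of_tendsto_of_tendsto_of_le_of_le' tendsto_const_nhds hBtend
    · exact Filter.Eventually.of_forall hgnonneg
    · filter_upwards [Filter.eventually_ge_atTop (0:ℝ)] with t ht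
      exact hgle t ht
  -- from g → 0 deduce r → 0 and ψ → 0
  have hbound : ∀ (f : ℝ → ℝ), (∀ t, (f t)^2 ≤ g t / (m/4)) →
      Filter.Tendsto f Filter.atTop (nhds 0) := by
    intro f hf
    have hsq : Filter.Tendsto (fun t => Real.sqrt (g t / (m/4))) Filter.atTop (nhds 0) := by
      have h1 : Filter.Tendsto (fun t => g t / (m/4)) Filter.atTop (nhds 0) := by
        simpa using hgtend.div_const (m/4)
      simpa using h1.sqrt
    have hnsq : Filter.Tendsto (fun t => -Real.sqrt (g t / (m/4))) Filter.atTop (nhds 0) := by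
      simpa using hsq.neg
    have habs : ∀ t, |f t| ≤ Real.sqrt (g t / (m/4)) := fun t => Real.abs_le_sqrt (hf t)
    apply tendsto_of_tendsto_of_tendsto_of_le_of_le' hnsq hsq
    · exact Filter.Eventually.of_forall fun t => by
        have := habs t; rw [abs_le] at this; linarith [this.1]
    · exact Filter.Eventually.of_forall fun t => by
        have := habs t; rw [abs_le] at this; exact this.2
  constructor
  · apply hbound
    intro t
    rw [le_div_iff₀ (by linarith : (0:ℝ) < m/4)]
    have := hlower t
    nlinarith [sq_nonneg (ψ t)]
  · apply hbound
    intro t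
    rw [le_div_iff₀ (by linarith : (0:ℝ) < m/4)]
    have := hlower t
    nlinarith [sq_nonneg (r t)]
end
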